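/- Let P(x_1,...,x_n) be a polynomial over a field of characteristic two and J ⊆ {1,...,n}. For I ⊆ {1,...,n}, let P_{-I} denote the polynomial obtained from P by substituting 0 for x_i for all i ∈ I. Define Q = Σ_{I ⊆ J} P_{-I}. Then for every monomial T divisible by Π_{i ∈ J} x_i, the coefficient of T in Q equals the coefficient of T in P, and for every other monomial T the coefficient of T in Q is zero. -/

import Mathlib

open MvPolynomial

lemma coeff_aeval_zeroed {F : Type*} [CommRing F] {n : ℕ}
    (P : MvPolynomial (Fin n) F) (I : Finset (Fin n)) (T : Fin n →₀ ℕ) :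
    (MvPolynomial.aeval (fun i => if i ∈ I then 0 else MvPolynomial.X i) P).coeff T
      = if ∀ i ∈ I, T i = 0 then P.coeff T else 0 := by
  induction P using MvPolynomial.induction_on' with
  | monomial d c =>
    rw [aeval_monomial]
    by_cases hd : ∀ i ∈ I, d i = 0
    · have hprod : (d.prod fun i k => (if i ∈ I then (0:MvPolynomial (Fin n) F) else X i) ^ k)
          = monomial d 1 := by
        rw [monomial_eq]
        simp only [C_1, one_mul]
        apply Finsupp.prod_congr
        intro i hi
        have : i ∉ I := fun h => (Finsupp.mem_support_iff.mp hi) (hd i h)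
        simp [this]
      rw [hprod]
      simp only [algebraMap_eq, coeff_C_mul, coeff_monomial]
      by_cases hT : d = T
      · subst hT
        rw [if_pos hd]
        simp [coeff_monomial]
      · simp [hT, coeff_monomial]
    · push_neg at hd
      obtain ⟨i, hiI, hdi⟩ := hd
      have hprod : (d.prod fun i k => (if i ∈ I then (0:MvPolynomial (Fin n) F) else X i) ^ k)
          = 0 := by
        apply Finset.prod_eq_zero (Finsupp.mem_support_iff.mpr hdi)
        simp [hiI, zero_pow hdi]
      rw [hprod, mul_zero, coeff_zero]
      split_ifs with hT
      · rw [coeff_monomial]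
        split_ifs with h
        · exact absurd (h ▸ hT i hiI) hdi
        · rfl
      · rfl
  | add p q hp hq =>
    simp only [map_add, coeff_add, hp, hq]
    split_ifs <;> simp

theorem stmt2 {F : Type*} [Field F] [CharP F 2] {n : ℕ}
    (P : MvPolynomial (Fin n) F) (J : Finset (Fin n))
    (Q : MvPolynomial (Fin n) F)
    (hQ : Q = ∑ I ∈ J.powerset,
        MvPolynomial.aeval (fun i => if i ∈ I then 0 else MvPolynomial.X i) P)
    (T : Fin n →₀ ℕ) :
    ((∀ i ∈ J, 1 ≤ T i) → Q.coeff T = P.coeff T) ∧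
    ((¬ ∀ i ∈ J, 1 ≤ T i) → Q.coeff T = 0) := by
  have hc : Q.coeff T = ((J.powerset.filter (fun I => ∀ i ∈ I, T i = 0)).card : F) * P.coeff T := by
    rw [hQ, MvPolynomial.coeff_sum]
    rw [Finset.sum_congr rfl (fun I _ => coeff_aeval_zeroed P I T)]
    rw [Finset.sum_ite, Finset.sum_const, Finset.sum_const_zero, add_zero, nsmul_eq_mul]
  have hfilter : J.powerset.filter (fun I => ∀ i ∈ I, T i = 0)
      = (J.filter (fun i => T i = 0)).powerset := by
    ext I
    simp only [Finset.mem_filter, Finset.mem_powerset, Finset.subset_iff]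
    aesop
  rw [hfilter, Finset.card_powerset] at hc
  constructor
  · intro h
    have he : J.filter (fun i => T i = 0) = ∅ := by
      rw [Finset.filter_eq_empty_iff]
      intro i hi h0
      have := h i hi
      omega
    rw [he] at hc
    simpa using hc
  · intro h
    push_neg at h
    obtain ⟨i, hiJ, hTi⟩ := h
    have hTi0 : T i = 0 := by omega
    have hne : (J.filter (fun i => T i = 0)).Nonempty := ⟨i, Finset.mem_filter.mpr ⟨hiJ, hTi0⟩⟩
    rw [hc]
    have h2 : ((2 : ℕ) : F) = 0 := by exact_mod_cast CharP.cast_eq_zero F 2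
    rw [Nat.cast_pow, h2, zero_pow (Finset.card_pos.mpr hne).ne', zero_mul]
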